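/- Let u ≥ 1 be an integer and let A be the u×u complex matrix with A_{j,k} = √−1 for j < k, A_{j,j} = 0, and A_{j,k} = −√−1 for j > k. Then A is Hermitian, all its eigenvalues are real, and A has a real eigenvalue λ with λ² ≥ (u²−1)/3; equivalently, the largest eigenvalue of A² is at least (u²−1)/3. -/

import Mathlib

open Finset

private lemma aux_sum_lin (n : ℕ) : ∑ j ∈ Finset.range n, (j : ℝ) = n * (n - 1) / 2 := by
  induction n with
  | zero => simp
  | succ m ih =>
    rw [Finset.sum_range_succ, ih]
    push_cast
    ring

private lemma aux_sum_sq (n : ℕ) :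
    ∑ j ∈ Finset.range n, (j : ℝ) ^ 2 = n * (n - 1) * (2 * n - 1) / 6 := by
  induction n with
  | zero => simp
  | succ m ih =>
    rw [Finset.sum_range_succ, ih]
    push_cast
    ring

private lemma aux_sum_odd_sq (n : ℕ) :
    ∑ j ∈ Finset.range n, ((n : ℝ) - 1 - 2 * j) ^ 2 = n * ((n : ℝ) ^ 2 - 1) / 3 := by
  have h : ∀ j ∈ Finset.range n, ((n : ℝ) - 1 - 2 * j) ^ 2
      = ((n : ℝ) - 1) ^ 2 - (4 * ((n : ℝ) - 1)) * j + 4 * (j : ℝ) ^ 2 := by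
    intro j _; ring
  rw [Finset.sum_congr rfl h]
  simp only [Finset.sum_add_distrib, Finset.sum_sub_distrib, Finset.sum_const,
    ← Finset.mul_sum, aux_sum_lin, aux_sum_sq, Finset.card_range, nsmul_eq_mul]
  ring

theorem A_hermitian_large_eigenvalue (u : ℕ) (hu : 1 ≤ u)
    (A : Matrix (Fin u) (Fin u) ℂ)
    (hA : ∀ j k : Fin u, A j k =
      if (j : ℕ) < (k : ℕ) then Complex.I else if j = k then 0 else -Complex.I) :
    A.IsHermitian ∧
      (∀ (μ : ℂ) (v : Fin u → ℂ), v ≠ 0 → A.mulVec v = μ • v → μ.im = 0) ∧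
      ∃ (lam : ℝ) (v : Fin u → ℂ), v ≠ 0 ∧ A.mulVec v = (lam : ℂ) • v ∧
        ((u : ℝ) ^ 2 - 1) / 3 ≤ lam ^ 2 := by
  classical
  have hH : A.IsHermitian := by
    rw [Matrix.IsHermitian]
    ext i j
    rw [Matrix.conjTranspose_apply, hA, hA]
    rcases lt_trichotomy (i : ℕ) (j : ℕ) with h | h | h
    · simp [h, not_lt.2 h.le, (Fin.val_ne_iff.1 h.ne).symm, Fin.val_ne_iff.1 h.ne, Complex.conj_I]
    · simp [Fin.ext h, h.not_gt]
    · simp [h, not_lt.2 h.le, Fin.val_ne_iff.1 h.ne, (Fin.val_ne_iff.1 h.ne).symm, Complex.conj_I]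
  refine ⟨hH, ?_, ?_⟩
  · -- eigenvalues are real
    intro μ v hv heig
    have hdp : dotProduct (star v) v = ((∑ i, Complex.normSq (v i) : ℝ) : ℂ) := by
      simp [dotProduct, Complex.normSq_eq_conj_mul_self]
    have hs : dotProduct (star v) v ≠ 0 := by
      intro h
      apply hv
      funext i
      rw [hdp] at h
      have h2 : ∑ i, Complex.normSq (v i) = 0 := by exact_mod_cast h
      have h3 : Complex.normSq (v i) = 0 :=
        (Finset.sum_eq_zero_iff_of_nonneg (fun j _ => Complex.normSq_nonneg _)).1 h2 i (mem_univ i)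
      exact Complex.normSq_eq_zero.1 h3
    have hss : star (dotProduct (star v) v) = dotProduct (star v) v :=
      (Matrix.star_dotProduct v v).symm
    have h1 : dotProduct (star v) (A.mulVec v) = μ * dotProduct (star v) v := by
      rw [heig, dotProduct_smul, smul_eq_mul]
    have h2 : star (dotProduct (star v) (A.mulVec v))
        = dotProduct (star v) (A.mulVec v) := by
      conv_lhs => rw [Matrix.star_dotProduct, star_star, Matrix.star_mulVec]
      rw [← Matrix.dotProduct_mulVec, hH.eq]
    rw [h1, star_mul', hss] at h2
    have h3 := mul_right_cancel₀ hs h2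
    have h4 := congrArg Complex.im h3
    simp only [Complex.star_def, Complex.conj_im] at h4
    linarith
  · -- the large eigenvalue
    set b := hH.eigenvectorBasis with hb
    set lam := hH.eigenvalues with hlam
    set w : EuclideanSpace ℂ (Fin u) := WithLp.toLp 2 (fun _ => 1) with hwdef
    set c : Fin u → ℂ := fun i => b.repr w i with hc
    set w2 : EuclideanSpace ℂ (Fin u) := WithLp.toLp 2 (A.mulVec w) with hw2
    have hstar : ∀ i, star (A.mulVec ⇑(b i)) = Matrix.vecMul (star (⇑(b i))) A := by
      intro i; rw [Matrix.star_mulVec, hH.eq]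
    have hci : ∀ i, c i = dotProduct (star ⇑(b i)) w := by
      intro i
      rw [hc]
      show b.repr w i = _
      rw [b.repr_apply_apply, EuclideanSpace.inner_eq_star_dotProduct]
      exact dotProduct_comm _ _
    have hd : ∀ i, b.repr w2 i = (lam i : ℂ) * c i := by
      intro i
      rw [b.repr_apply_apply, EuclideanSpace.inner_eq_star_dotProduct, dotProduct_comm]
      show dotProduct (star ⇑(b i)) (A.mulVec w) = _
      rw [Matrix.dotProduct_mulVec, ← hstar, hH.mulVec_eigenvectorBasis, star_smul,
        smul_dotProduct, hci, Complex.real_smul]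
      rfl
    have hP1 : (inner ℂ w w : ℂ) = ∑ i, (starRingEnd ℂ) (c i) * c i := by
      rw [← b.repr.inner_map_map w w, PiLp.inner_apply]
      simp only [hc, RCLike.inner_apply]
      exact Finset.sum_congr rfl (fun i _ => mul_comm _ _)
    have hP2 : (inner ℂ w2 w2 : ℂ) = ∑ i, ((lam i : ℂ)) ^ 2 * ((starRingEnd ℂ) (c i) * c i) := by
      rw [← b.repr.inner_map_map w2 w2, PiLp.inner_apply]
      apply Finset.sum_congr rfl
      intro i _
      rw [RCLike.inner_apply]
      rw [hd, _root_.map_mul, Complex.conj_ofReal]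
      ring
    have hQ1 : (inner ℂ w w : ℂ) = (u : ℂ) := by
      rw [PiLp.inner_apply]
      simp [hwdef]
    -- explicit entries of A *ᵥ w
    have hr : ∀ j : Fin u, w2 j = ((((u : ℝ) - 1 - 2 * (j : ℕ)) : ℝ) : ℂ) * Complex.I := by
      intro j
      show (A.mulVec (fun _ => 1)) j = _
      have : (A.mulVec (fun _ => 1)) j = ∑ k : Fin u,
          ((if (j : ℕ) < (k : ℕ) then (1 : ℂ) else 0)
            - (if (k : ℕ) < (j : ℕ) then (1 : ℂ) else 0)) * Complex.I := by
        simp only [Matrix.mulVec, dotProduct, mul_one]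
        apply Finset.sum_congr rfl
        intro k _
        rw [hA]
        rcases lt_trichotomy (j : ℕ) (k : ℕ) with h | h | h
        · simp [h, not_lt.2 h.le]
        · simp [Fin.ext h, h.not_gt]
        · simp [h, not_lt.2 h.le, Fin.val_ne_iff.1 h.ne.symm]
      rw [this, ← Finset.sum_mul, Finset.sum_sub_distrib]
      congr 1
      rw [Fin.sum_univ_eq_sum_range (fun k => if (j : ℕ) < k then (1 : ℂ) else 0) u,
        Fin.sum_univ_eq_sum_range (fun k => if k < (j : ℕ) then (1 : ℂ) else 0) u,
        Finset.sum_boole, Finset.sum_boole]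
      have e1 : Finset.filter (fun k => (j : ℕ) < k) (Finset.range u)
          = Finset.Ico ((j : ℕ) + 1) u := by
        ext k; simp [Finset.mem_Ico]; omega
      have e2 : Finset.filter (fun k => k < (j : ℕ)) (Finset.range u)
          = Finset.range (j : ℕ) := by
        ext k
        simp only [Finset.mem_filter, Finset.mem_range]
        exact ⟨fun h => h.2, fun h => ⟨h.trans j.2, h⟩⟩
      rw [e1, e2, Nat.card_Ico, Finset.card_range]
      have hj : (j : ℕ) + 1 ≤ u := j.2
      push_cast [Nat.cast_sub hj]
      ring
    have hQ2 : (inner ℂ w2 w2 : ℂ)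
        = ((∑ j : Fin u, ((u : ℝ) - 1 - 2 * (j : ℕ)) ^ 2 : ℝ) : ℂ) := by
      rw [PiLp.inner_apply]
      push_cast
      apply Finset.sum_congr rfl
      intro j _
      rw [RCLike.inner_apply]
      rw [hr j, _root_.map_mul, Complex.conj_ofReal, Complex.conj_I]
      push_cast
      ring_nf
      rw [Complex.I_sq]
      ring
    -- real versions
    have hreal1 : ∑ i, Complex.normSq (c i) = (u : ℝ) := by
      have h := hP1.symm.trans hQ1
      have h2 : ((∑ i, Complex.normSq (c i) : ℝ) : ℂ) = ((u : ℝ) : ℂ) := by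
        push_cast [Complex.normSq_eq_conj_mul_self]
        exact_mod_cast h
      exact_mod_cast h2
    have hreal2 : ∑ i, (lam i) ^ 2 * Complex.normSq (c i)
        = ∑ j : Fin u, ((u : ℝ) - 1 - 2 * (j : ℕ)) ^ 2 := by
      have h := hP2.symm.trans hQ2
      have h2 : ((∑ i, (lam i) ^ 2 * Complex.normSq (c i) : ℝ) : ℂ)
          = ((∑ j : Fin u, ((u : ℝ) - 1 - 2 * (j : ℕ)) ^ 2 : ℝ) : ℂ) := by
        push_cast [Complex.normSq_eq_conj_mul_self]
        exact_mod_cast h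
      exact_mod_cast h2
    -- pick the maximal eigenvalue
    obtain ⟨i₀, -, hmax⟩ := Finset.exists_max_image Finset.univ (fun i => (lam i) ^ 2)
      ⟨⟨0, hu⟩, mem_univ _⟩
    refine ⟨lam i₀, ⇑(b i₀), ?_, ?_, ?_⟩
    · intro h
      apply b.orthonormal.ne_zero i₀
      ext j
      simpa using congrFun h j
    · rw [hH.mulVec_eigenvectorBasis]
      funext j
      simp [Complex.real_smul, hlam, hb]
    · have hsum : ∑ j : Fin u, ((u : ℝ) - 1 - 2 * (j : ℕ)) ^ 2
          = u * ((u : ℝ) ^ 2 - 1) / 3 := by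
        rw [Fin.sum_univ_eq_sum_range (fun j => ((u : ℝ) - 1 - 2 * j) ^ 2) u]
        exact aux_sum_odd_sq u
      have hle : ∑ i, (lam i) ^ 2 * Complex.normSq (c i) ≤ (lam i₀) ^ 2 * u := by
        rw [← hreal1, Finset.mul_sum]
        apply Finset.sum_le_sum
        intro i _
        exact mul_le_mul_of_nonneg_right (hmax i (mem_univ i)) (Complex.normSq_nonneg _)
      rw [hreal2, hsum] at hle
      have hupos : (0 : ℝ) < u := by exact_mod_cast hu
      nlinarith [hle, hupos]
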